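/- Let f ∈ ℝ[X₁,…,Xₙ] with deg f ≤ 2d, and let y be an optimal solution of the moment relaxation (P_{2d}), i.e. y is feasible and its objective value equals P*_{2d}. Suppose there exist N ∈ ℕ, points a₁,…,a_N ∈ ℝⁿ and λ₁,…,λ_N > 0 such that M_d(y) = Σᵢ λᵢ V_d(aᵢ)V_d(aᵢ)ᵀ. Then P* = P*_{2d} and each aᵢ is a global minimizer of f, i.e. f(aᵢ) = P* for all i. -/

import Mathlib

open MvPolynomial Matrix

noncomputable section

/-- `Idx n d` is the set `N_d` of exponent multi-indices `α ∈ ℕⁿ` with `|α| ≤ d`. -/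
abbrev Idx (n d : ℕ) := {α : Fin n →₀ ℕ // (∑ i, α i) ≤ d}

instance idxFintype (n d : ℕ) : Fintype (Idx n d) :=
  Fintype.ofInjective
    (fun a => (fun i => (⟨a.1 i, Nat.lt_succ_of_le
        (le_trans (Finset.single_le_sum (fun _ _ => Nat.zero_le _) (Finset.mem_univ i)) a.2)⟩ :
        Fin (d + 1))))
    (fun a b h => by
      apply Subtype.ext
      ext i
      exact congrArg Fin.val (congrFun h i))

/-- The moment matrix `M_d(y)`, indexed by `N_d × N_d`, with entries `y_{α+β}`. -/
def momMat (n d : ℕ) (y : (Fin n →₀ ℕ) → ℝ) : Matrix (Idx n d) (Idx n d) ℝ :=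
  Matrix.of fun a b => y (a.1 + b.1)

/-- The vector `V_d(x) = (x^α)_{α ∈ N_d}` of monomials of degree at most `d` at `x`. -/
def monoVec (n d : ℕ) (x : Fin n → ℝ) : Idx n d → ℝ :=
  fun a => ∏ i, x i ^ (a.1 i)

/-- The Riesz functional `L_y(h) = Σ_α h_α y_α`. -/
def riesz {n : ℕ} (y : (Fin n →₀ ℕ) → ℝ) (h : MvPolynomial (Fin n) ℝ) : ℝ :=
  ∑ α ∈ h.support, h.coeff α * y α

/-- Feasibility for the moment relaxation `(P_k)` : `y_0 = 1` and `M_{⌊k/2⌋}(y) ⪰ 0`. -/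
def momFeasible (n k : ℕ) (y : (Fin n →₀ ℕ) → ℝ) : Prop :=
  y 0 = 1 ∧ (momMat n (k / 2) y).PosSemidef

/-- `P*_k`, the optimal value of the moment relaxation `(P_k)`. -/
def momOpt (n k : ℕ) (f : MvPolynomial (Fin n) ℝ) : EReal :=
  sInf {v : EReal | ∃ y, momFeasible n k y ∧ v = (riesz y f : ℝ)}

/-- `P*`, the global infimum of `f` on `ℝⁿ`. -/
def globalOpt (n : ℕ) (f : MvPolynomial (Fin n) ℝ) : EReal :=
  sInf {v : EReal | ∃ x : Fin n → ℝ, v = (eval x f : ℝ)}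

/-- A rank-one matrix `v vᵀ` over `ℝ` is positive semidefinite. -/
lemma posSemidef_vecMulVec_self {m : Type*} [Fintype m] (v : m → ℝ) :
    (Matrix.vecMulVec v v).PosSemidef := by
  rw [Matrix.posSemidef_iff_dotProduct_mulVec]
  constructor
  · ext i j
    simp [Matrix.vecMulVec_apply, Matrix.conjTranspose_apply, mul_comm]
  · intro x
    have h : dotProduct (star x) (Matrix.vecMulVec v v *ᵥ x)
        = (∑ i, v i * x i) * (∑ i, v i * x i) := by
      simp [dotProduct, Matrix.mulVec, Matrix.vecMulVec_apply, Finset.mul_sum,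
        Finset.sum_mul]
      rw [Finset.sum_comm]
      apply Finset.sum_congr rfl
      intro i _
      apply Finset.sum_congr rfl
      intro j _
      ring
    rw [h]
    exact mul_self_nonneg _

/-- Any natural number `m ≤ ∑ α` can be realized as the degree of some `β ≤ α`. -/
lemma exists_le_sum_eq {n : ℕ} (α : Fin n →₀ ℕ) :
    ∀ m : ℕ, m ≤ ∑ i, α i → ∃ β : Fin n →₀ ℕ, β ≤ α ∧ ∑ i, β i = m := by
  intro m
  induction m with
  | zero => intro _; exact ⟨0, zero_le, by simp⟩
  | succ m ih =>
    intro hm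
    obtain ⟨β, hβle, hβsum⟩ := ih (Nat.le_of_succ_le hm)
    have hlt : ∑ i, β i < ∑ i, α i := by omega
    have hex : ∃ i, β i < α i := by
      by_contra h
      push_neg at h
      exact absurd (Finset.sum_le_sum (fun i _ => h i)) (not_le.mpr hlt)
    obtain ⟨i, hi⟩ := hex
    refine ⟨β + Finsupp.single i 1, ?_, ?_⟩
    · intro j
      rcases eq_or_ne j i with rfl | hji
      · simpa [Finsupp.single_apply] using hi
      · simp [Finsupp.single_apply, Ne.symm hji]
        exact hβle j
    · simp [Finsupp.single_apply, Finset.sum_add_distrib, hβsum]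

/-- if an optimal solution `y` of `(P_{2d})` has a moment matrix which is a
positive combination of matrices `V_d(aᵢ)V_d(aᵢ)ᵀ`, then `P* = P*_{2d}` and every `aᵢ` is a
global minimizer of `f`. -/
theorem optimality_from_decomposition (n d : ℕ) (f : MvPolynomial (Fin n) ℝ)
    (hf : f.totalDegree ≤ 2 * d) (y : (Fin n →₀ ℕ) → ℝ)
    (hfeas : momFeasible n (2 * d) y)
    (hopt : ((riesz y f : ℝ) : EReal) = momOpt n (2 * d) f)
    (N : ℕ) (a : Fin N → (Fin n → ℝ)) (lam : Fin N → ℝ) (hlam : ∀ i, 0 < lam i)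
    (hM : momMat n d y =
      ∑ i, lam i • Matrix.vecMulVec (monoVec n d (a i)) (monoVec n d (a i))) :
    globalOpt n f = momOpt n (2 * d) f ∧
    ∀ i, ((eval (a i) f : ℝ) : EReal) = globalOpt n f := by
  classical
  -- Key : the moment decomposition at the level of entries
  have key : ∀ α : Fin n →₀ ℕ, (∑ i, α i) ≤ 2 * d →
      y α = ∑ i, lam i * ∏ j, a i j ^ α j := by
    intro α hα
    obtain ⟨β, hβle, hβsum⟩ := exists_le_sum_eq α (min (∑ i, α i) d) (min_le_left _ _)
    set γ : Fin n →₀ ℕ := α - β with hγ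
    have hβγ : β + γ = α := add_tsub_cancel_of_le hβle
    have hsum : (∑ i, β i) + (∑ i, γ i) = ∑ i, α i := by
      rw [← Finset.sum_add_distrib]
      exact Finset.sum_congr rfl fun i _ => by
        have := congrFun (congrArg (Finsupp.toFun) hβγ) i
        simpa [Finsupp.add_apply] using congrFun (congrArg DFunLike.coe hβγ) i
    have hβd : (∑ i, β i) ≤ d := by rw [hβsum]; exact min_le_right _ _
    have hγd : (∑ i, γ i) ≤ d := by omega
    have : y α = momMat n d y ⟨β, hβd⟩ ⟨γ, hγd⟩ := by
      simp [momMat, hβγ]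
    rw [this, hM]
    rw [Matrix.sum_apply]
    apply Finset.sum_congr rfl
    intro i _
    simp only [Matrix.smul_apply, Matrix.vecMulVec_apply, smul_eq_mul, monoVec]
    congr 1
    rw [← Finset.prod_mul_distrib]
    apply Finset.prod_congr rfl
    intro j _
    rw [← pow_add]
    congr 1
    have := congrFun (congrArg DFunLike.coe hβγ) j
    simpa [Finsupp.add_apply] using this
  -- Σ λᵢ = 1
  have lamsum : ∑ i, lam i = 1 := by
    have h0 : (∑ i, (0 : Fin n →₀ ℕ) i) ≤ 2 * d := by simp
    have := key 0 h0
    rw [hfeas.1] at this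
    simpa using this.symm
  -- The Riesz functional of y at f is the convex combination of the values f(aᵢ)
  have riesz_eq : riesz y f = ∑ i, lam i * eval (a i) f := by
    unfold riesz
    have hrw : ∀ α ∈ f.support, f.coeff α * y α
        = ∑ i, lam i * (f.coeff α * ∏ j, a i j ^ α j) := by
      intro α hα
      have hd : (∑ i, α i) ≤ 2 * d := by
        have h1 : (α.sum fun _ e => e) ≤ f.totalDegree := le_totalDegree hα
        have h2 : (α.sum fun _ e => e) = ∑ i, α i :=
          Finsupp.sum_fintype _ _ (fun _ => rfl)
        omega
      rw [key α hd, Finset.mul_sum]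
      apply Finset.sum_congr rfl
      intro i _
      ring
    rw [Finset.sum_congr rfl hrw, Finset.sum_comm]
    apply Finset.sum_congr rfl
    intro i _
    rw [eval_eq', Finset.mul_sum]
  -- For every point x, the dirac moments are feasible with value f(x)
  have feasval : ∀ x : Fin n → ℝ, momOpt n (2 * d) f ≤ ((eval x f : ℝ) : EReal) := by
    intro x
    apply sInf_le
    refine ⟨fun α => ∏ i, x i ^ α i, ⟨by simp, ?_⟩, ?_⟩
    · have h2 : 2 * d / 2 = d := by omega
      rw [h2]
      have : momMat n d (fun α => ∏ i, x i ^ α i)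
          = Matrix.vecMulVec (monoVec n d x) (monoVec n d x) := by
        ext α β
        simp only [momMat, Matrix.of_apply, Matrix.vecMulVec_apply, monoVec]
        rw [← Finset.prod_mul_distrib]
        apply Finset.prod_congr rfl
        intro j _
        rw [← pow_add]
        rfl
      rw [this]
      exact posSemidef_vecMulVec_self _
    · congr 1
      rw [eval_eq']
      unfold riesz
      rfl
  -- momOpt ≤ globalOpt
  have hmg : momOpt n (2 * d) f ≤ globalOpt n f := by
    apply le_sInf
    rintro v ⟨x, rfl⟩
    exact feasval x
  -- globalOpt ≤ f(aᵢ)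
  have hga : ∀ i, globalOpt n f ≤ ((eval (a i) f : ℝ) : EReal) := by
    intro i
    exact sInf_le ⟨a i, rfl⟩
  -- N is positive
  have hN : Nonempty (Fin N) := by
    rcases Nat.eq_zero_or_pos N with h | h
    · subst h; simp at lamsum
    · exact ⟨⟨0, h⟩⟩
  -- some aᵢ achieves value ≤ riesz y f
  have hexi : ∃ i, eval (a i) f ≤ riesz y f := by
    by_contra h
    push_neg at h
    have : ∑ i, lam i * riesz y f < ∑ i, lam i * eval (a i) f :=
      Finset.sum_lt_sum_of_nonempty (by simpa using Finset.univ_nonempty)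
        (fun i _ => by
          have := hlam i
          exact (mul_lt_mul_iff_right₀ this).mpr (h i))
    rw [← riesz_eq, ← Finset.sum_mul, lamsum, one_mul] at this
    exact lt_irrefl _ this
  obtain ⟨i₀, hi₀⟩ := hexi
  -- globalOpt = momOpt = riesz y f
  have hglobal : globalOpt n f = momOpt n (2 * d) f := by
    apply le_antisymm _ hmg
    calc globalOpt n f ≤ ((eval (a i₀) f : ℝ) : EReal) := hga i₀
      _ ≤ ((riesz y f : ℝ) : EReal) := EReal.coe_le_coe_iff.mpr hi₀
      _ = momOpt n (2 * d) f := hopt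
  refine ⟨hglobal, ?_⟩
  -- each aᵢ is a global minimizer
  have hcle : ∀ i, riesz y f ≤ eval (a i) f := by
    intro i
    have : ((riesz y f : ℝ) : EReal) ≤ ((eval (a i) f : ℝ) : EReal) := by
      rw [hopt, ← hglobal]
      exact hga i
    exact EReal.coe_le_coe_iff.mp this
  have hzero : ∑ i, lam i * (eval (a i) f - riesz y f) = 0 := by
    have : ∑ i, lam i * (eval (a i) f - riesz y f)
        = (∑ i, lam i * eval (a i) f) - (∑ i, lam i) * riesz y f := by
      rw [Finset.sum_mul, ← Finset.sum_sub_distrib]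
      apply Finset.sum_congr rfl
      intro i _
      ring
    rw [this, ← riesz_eq, lamsum, one_mul, sub_self]
  have heach : ∀ i, eval (a i) f = riesz y f := by
    intro i
    have hnn : ∀ j ∈ Finset.univ, (0:ℝ) ≤ lam j * (eval (a j) f - riesz y f) :=
      fun j _ => mul_nonneg (hlam j).le (sub_nonneg.mpr (hcle j))
    have := (Finset.sum_eq_zero_iff_of_nonneg hnn).mp hzero i (Finset.mem_univ i)
    have hne : lam i ≠ 0 := (hlam i).ne'
    have : eval (a i) f - riesz y f = 0 := by
      rcases mul_eq_zero.mp this with h | h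
      · exact absurd h hne
      · exact h
    linarith
  intro i
  rw [heach i, hopt, hglobal]
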